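/- Fix a k-anxious root of unity α, let m be the smallest positive integer such that α^{k^m} = α, and let 𝒜 be the disjoint union of the sets A_{α^{k^i}} for 0 ≤ i ≤ m−1. Let (c_1,…,c_m) be a sequence of rational functions of length exactly m with every c_i ≠ 0. Assume that clm_{(a_i)}(c_i) ≥ 0 for every (a_i) ∈ 𝒜, and that for every a ≥ 0, 1 ≤ b ≤ m and every (a_i) ∈ minclm_{a,b}(c_i), the calmness clm_{(a_i)}(c_i) = 0. Then there exists a nonzero polynomial h ∈ K[z] such that the sequence h*(c_i) is α^{k^i}-calm for every i ≥ 0, i.e. no term of h*(c_i) has a pole at any α^{k^i}. -/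

import Mathlib

open Polynomial

attribute [local instance] Classical.propDecidable

noncomputable section

variable {K : Type*} [Field K]

/-- Integer order of vanishing of a rational function at `α` (junk value `0` for `c = 0`). -/
def vInt (α : K) (c : RatFunc K) : ℤ :=
  (c.num.rootMultiplicity α : ℤ) - (c.denom.rootMultiplicity α : ℤ)

/-- The `(z - α)`-adic valuation on `K(z)`, with `vAt α 0 = ⊤`. -/
def vAt (α : K) (c : RatFunc K) : WithTop ℤ :=
  if c = 0 then ⊤ else (vInt α c : WithTop ℤ)

/-- Substitution `z ↦ z^i` in a rational function. -/
def substPow (i : ℕ) (c : RatFunc K) : RatFunc K :=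
  RatFunc.eval (algebraMap K (RatFunc K)) (RatFunc.X ^ i) c

/-- A polynomial viewed as a rational function. -/
def toRat (p : Polynomial K) : RatFunc K := algebraMap (Polynomial K) (RatFunc K) p

/-- A rational function is a polynomial. -/
def IsPolyFun (c : RatFunc K) : Prop := ∃ p : Polynomial K, c = toRat p

def IsRootOfUnity (α : K) : Prop := ∃ m : ℕ, 0 < m ∧ α ^ m = 1

/-- `α` is `k`-calm: zero, or a root of unity whose order is not coprime to `k`. -/
def IsCalmNum (k : ℕ) (α : K) : Prop :=
  α = 0 ∨ (0 < orderOf α ∧ ¬ Nat.Coprime (orderOf α) k)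

def IsAnxious (k : ℕ) (α : K) : Prop := ¬ IsCalmNum k α

/-- A rational function is `k`-calm: no poles at `k`-anxious numbers. -/
def IsCalmFun (k : ℕ) (c : RatFunc K) : Prop :=
  ∀ α : K, IsAnxious k α → 0 ≤ vAt α c

/-- Action of a rational function `h` on a finite sequence `(c_1, …, c_n)`;
the index `i : Fin n` stands for the 1-based index `i+1`. -/
def act (k : ℕ) (h : RatFunc K) {n : ℕ} (c : Fin n → RatFunc K) : Fin n → RatFunc K :=
  fun i => substPow (k ^ (i.1 + 1)) h / h * c i

def IsPrecalmSeq (k : ℕ) {n : ℕ} (c : Fin n → RatFunc K) : Prop :=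
  ∃ h : Polynomial K, h ≠ 0 ∧ ∀ i, IsCalmFun k (act k (toRat h) c i)

/-- Partial sums `ā_i = a_0 + … + a_{i-1}` of an infinite sequence with values in `{1,…,n}`. -/
def abarInf {n : ℕ} (a : ℕ → Fin n) (i : ℕ) : ℕ :=
  ∑ j ∈ Finset.range i, ((a j).1 + 1)

/-- Partial sums for a finite sequence (a list). -/
def abarList {n : ℕ} (l : List (Fin n)) (i : ℕ) : ℕ :=
  ((l.take i).map (fun j => j.1 + 1)).sum

/-- Full sum `ā_μ` of a finite sequence. -/
def barSum {n : ℕ} (l : List (Fin n)) : ℕ := (l.map (fun j => j.1 + 1)).sum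

/-- Calmness w.r.t. an anxious `α` that is not a root of unity and an infinite sequence. -/
def clmInf (k : ℕ) (α : K) {n : ℕ} (c : Fin n → RatFunc K) (a : ℕ → Fin n) : WithTop ℤ :=
  if ∃ i, c (a i) = 0 then ⊤
  else ((∑ᶠ i : ℕ, vInt (α ^ k ^ abarInf a i) (c (a i)) : ℤ) : WithTop ℤ)

/-- Calmness w.r.t. an anxious root of unity `α` and a finite sequence. -/
def clmList (k : ℕ) (α : K) {n : ℕ} (c : Fin n → RatFunc K) (l : List (Fin n)) : WithTop ℤ :=
  ∑ i : Fin l.length, vAt (α ^ k ^ abarList l i.1) (c (l.get i))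

/-- Calmness of a single rational function w.r.t. an anxious `α`. -/
def clmOne (k : ℕ) (α : K) (c : RatFunc K) : WithTop ℤ :=
  if hμ : ∃ μ : ℕ, 0 < μ ∧ α ^ k ^ μ = α then
    ∑ i ∈ Finset.range (Nat.find hμ), vAt (α ^ k ^ i) c
  else if c = 0 then ⊤
  else ((∑ᶠ i : ℕ, vInt (α ^ k ^ i) c : ℤ) : WithTop ℤ)

/-- The `k`-kernel of a sequence. -/
def kernelSet (k : ℕ) (a : ℕ → K) : Set (ℕ → K) :=
  { b | ∃ e r : ℕ, r < k ^ e ∧ b = fun i => a (k ^ e * i + r) }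

/-- `k`-regularity of a formal power series. -/
def IsRegularSeries (k : ℕ) (f : PowerSeries K) : Prop :=
  FiniteDimensional K (Submodule.span K (kernelSet k (fun i => PowerSeries.coeff i f)))

/-- Cartier operator `Λ_{k,r}`. -/
def cartier (k r : ℕ) (f : PowerSeries K) : PowerSeries K :=
  PowerSeries.mk fun i => PowerSeries.coeff (k * i + r) f

/-- Substitution `z ↦ z^m` in a power series (for `m ≥ 1`). -/
def psSubstPow (m : ℕ) (f : PowerSeries K) : PowerSeries K :=
  PowerSeries.mk fun i => if m ∣ i then PowerSeries.coeff (i / m) f else 0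

/-- `f` satisfies the Mahler equation `f(z) = Σ_{i=1}^n c_i(z) f(z^{k^i})`. -/
def SatisfiesMahler (k : ℕ) {n : ℕ} (c : Fin n → RatFunc K) (f : PowerSeries K) : Prop :=
  ∃ (q : Polynomial K) (p : Fin n → Polynomial K), q ≠ 0 ∧
    (∀ i, toRat q * c i = toRat (p i)) ∧
    (q : PowerSeries K) * f = ∑ i : Fin n, ((p i : PowerSeries K) * psSubstPow (k ^ (i.1 + 1)) f)


/-- Substitution `z ↦ z^m` in a formal Laurent series (for `m ≥ 1`). -/
def lsSubstPow (m : ℕ) (g : LaurentSeries K) : LaurentSeries K :=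
  if h : 0 < m then
    HahnSeries.embDomain
      (OrderEmbedding.ofStrictMono (fun n : ℤ => (m : ℤ) * n)
        (fun a b hab => by
          exact mul_lt_mul_of_pos_left hab (by exact_mod_cast h))) g
  else 0

/-- A Laurent series `g` satisfies the Mahler equation `g(z) = Σ_{i=1}^n b_i(z) g(z^{k^i})`
with polynomial coefficients. -/
def SatisfiesMahlerPolyLS (k : ℕ) {n : ℕ} (b : Fin n → Polynomial K) (g : LaurentSeries K) : Prop :=
  g = ∑ i : Fin n, (((b i : PowerSeries K) : LaurentSeries K) * lsSubstPow (k ^ (i.1 + 1)) g)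

/-- Coefficients `d_{i,m}` of the special operators associated to `(c_1, …, c_n)`:
`dCoef k c m i` is `d_{i,m}`, with value `0` outside the range `1 ≤ i ≤ m + n`. -/
def dCoef (k : ℕ) {n : ℕ} (c : Fin n → RatFunc K) : ℕ → ℕ → RatFunc K
  | 0 => fun i => if h : 1 ≤ i ∧ i ≤ n then c ⟨i - 1, by omega⟩ else 0
  | m + 1 => fun i =>
      if _h1 : i ≤ m then dCoef k c m i
      else if _h2 : i = m + 1 then 0
      else if h3 : i ≤ m + 1 + n then
        dCoef k c m i + dCoef k c m (m + 1) * substPow (k ^ (m + 1)) (c ⟨i - m - 2, by omega⟩)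
      else 0

end

noncomputable section AuxProof

variable {K : Type*} [Field K]

lemma toRat_ne_zero {p : Polynomial K} (hp : p ≠ 0) : toRat p ≠ 0 :=
  RatFunc.algebraMap_ne_zero hp

lemma rootMultiplicity_one' (a : K) : rootMultiplicity a (1 : Polynomial K) = 0 :=
  Polynomial.rootMultiplicity_eq_zero (by simp [Polynomial.IsRoot])

lemma rm_pow (a : K) {p : Polynomial K} (hp : p ≠ 0) (e : ℕ) :
    rootMultiplicity a (p ^ e) = e * rootMultiplicity a p := by
  induction e with
  | zero => simpa using rootMultiplicity_one' a
  | succ e ih =>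
      rw [pow_succ, Polynomial.rootMultiplicity_mul (mul_ne_zero (pow_ne_zero _ hp) hp), ih]
      ring

lemma rm_prod {ι : Type*} (s : Finset ι) (f : ι → Polynomial K)
    (hf : ∀ i ∈ s, f i ≠ 0) (a : K) :
    rootMultiplicity a (∏ i ∈ s, f i) = ∑ i ∈ s, rootMultiplicity a (f i) := by
  classical
  induction s using Finset.induction with
  | empty => simpa using rootMultiplicity_one' a
  | @insert b s hb ih =>
      have h1 : f b ≠ 0 := hf b (Finset.mem_insert_self _ _)
      have h2 : ∀ i ∈ s, f i ≠ 0 := fun i hi => hf i (Finset.mem_insert_of_mem hi)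
      have h3 : ∏ i ∈ s, f i ≠ 0 := Finset.prod_ne_zero_iff.mpr h2
      rw [Finset.prod_insert hb, Polynomial.rootMultiplicity_mul (mul_ne_zero h1 h3),
        Finset.sum_insert hb, ih h2]

lemma toRat_mul (p q : Polynomial K) : toRat (p * q) = toRat p * toRat q := by
  simp [toRat, map_mul]

lemma vInt_div_toRat (β : K) {p q : Polynomial K} (hp : p ≠ 0) (hq : q ≠ 0) :
    vInt β (toRat p / toRat q) =
      (p.rootMultiplicity β : ℤ) - (q.rootMultiplicity β : ℤ) := by
  have hpn := toRat_ne_zero hp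
  have hqn := toRat_ne_zero hq
  set f : RatFunc K := toRat p / toRat q with hf
  have hfne : f ≠ 0 := div_ne_zero hpn hqn
  have hnum : f.num ≠ 0 := RatFunc.num_ne_zero hfne
  have hden : f.denom ≠ 0 := f.denom_ne_zero
  have h2 : toRat f.num / toRat f.denom = toRat p / toRat q :=
    (RatFunc.num_div_denom f).trans hf
  have h3 : toRat (f.num * q) = toRat (p * f.denom) := by
    rw [toRat_mul, toRat_mul]
    exact (div_eq_div_iff (toRat_ne_zero hden) hqn).mp h2
  have h4 : f.num * q = p * f.denom := RatFunc.algebraMap_injective K h3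
  have h5 := congrArg (rootMultiplicity β) h4
  rw [Polynomial.rootMultiplicity_mul (mul_ne_zero hnum hq),
    Polynomial.rootMultiplicity_mul (mul_ne_zero hp hden)] at h5
  rw [vInt]
  omega

lemma substPow_toRat (e : ℕ) (p : Polynomial K) :
    substPow e (toRat p) = toRat (p.comp (X ^ e)) := by
  have h := Polynomial.hom_eval₂ p (C : K →+* Polynomial K)
    (algebraMap (Polynomial K) (RatFunc K)) (X ^ e)
  have hc : p.comp (X ^ e) = Polynomial.eval₂ C (X ^ e) p := rfl
  have hev : substPow e (toRat p) =
      Polynomial.eval₂ (algebraMap K (RatFunc K)) (RatFunc.X ^ e) (toRat p).num /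
      Polynomial.eval₂ (algebraMap K (RatFunc K)) (RatFunc.X ^ e) (toRat p).denom := rfl
  rw [hev, toRat, RatFunc.num_algebraMap, RatFunc.denom_algebraMap,
    Polynomial.eval₂_one, div_one, toRat, hc, h]
  congr 1
  · rw [map_pow, RatFunc.algebraMap_X]


section Graph

variable {m : ℕ} [NeZero m]

def glab (s j : ZMod m) : Fin m := ⟨(j - s - 1).val, ZMod.val_lt _⟩

def sumZ : List (Fin m) → ZMod m
  | [] => 0
  | i :: l => ((i.1 + 1 : ℕ) : ZMod m) + sumZ l

variable (ω : ZMod m → Fin m → ℤ)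

def wtZ : ZMod m → List (Fin m) → ℤ
  | _, [] => 0
  | s, i :: l => ω s i + wtZ (s + ((i.1 + 1 : ℕ) : ZMod m)) l

lemma sumZ_append (l₁ l₂ : List (Fin m)) : sumZ (l₁ ++ l₂) = sumZ l₁ + sumZ l₂ := by
  induction l₁ with
  | nil => simp [sumZ]
  | cons a l ih =>
      show ((a.1 + 1 : ℕ) : ZMod m) + sumZ (l ++ l₂) = (((a.1 + 1 : ℕ) : ZMod m) + sumZ l) + sumZ l₂
      rw [ih, add_assoc]

lemma wtZ_append (l₁ l₂ : List (Fin m)) (s : ZMod m) :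
    wtZ ω s (l₁ ++ l₂) = wtZ ω s l₁ + wtZ ω (s + sumZ l₁) l₂ := by
  induction l₁ generalizing s with
  | nil => simp [wtZ, sumZ]
  | cons a l ih =>
      show ω s a + wtZ ω (s + ((a.1 + 1 : ℕ) : ZMod m)) (l ++ l₂) =
        (ω s a + wtZ ω (s + ((a.1 + 1 : ℕ) : ZMod m)) l) +
          wtZ ω (s + (((a.1 + 1 : ℕ) : ZMod m) + sumZ l)) l₂
      rw [ih, ← add_assoc s]
      ring


lemma glab_eq (s : ZMod m) (i : Fin m) : glab s (s + ((i.1 + 1 : ℕ) : ZMod m)) = i := by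
  apply Fin.ext
  show (s + ((i.1 + 1 : ℕ) : ZMod m) - s - 1).val = i.1
  have h : s + ((i.1 + 1 : ℕ) : ZMod m) - s - 1 = ((i.1 : ℕ) : ZMod m) := by push_cast; ring
  rw [h, ZMod.val_cast_of_lt i.2]

lemma cast_glab (s j : ZMod m) : s + (((glab s j).1 + 1 : ℕ) : ZMod m) = j := by
  show s + (((j - s - 1).val + 1 : ℕ) : ZMod m) = j
  push_cast
  rw [ZMod.natCast_val, ZMod.cast_id]
  ring

noncomputable def bf : ℕ → ZMod m → ℤ
  | 0, _ => 0
  | t + 1, j => max (bf t j)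
      (Finset.univ.sup' Finset.univ_nonempty fun s => bf t s - ω s (glab s j))

lemma bf_succ (t : ℕ) (j : ZMod m) : bf ω (t + 1) j = max (bf ω t j)
    (Finset.univ.sup' Finset.univ_nonempty fun s => bf ω t s - ω s (glab s j)) := rfl

lemma bf_nonneg : ∀ (t : ℕ) (j : ZMod m), 0 ≤ bf ω t j
  | 0, _ => le_refl 0
  | t + 1, j => le_trans (bf_nonneg t j) (le_max_left _ _)

lemma bf_mono (t : ℕ) (j : ZMod m) : bf ω t j ≤ bf ω (t + 1) j := le_max_left _ _

lemma bf_le {t t' : ℕ} (h : t ≤ t') (j : ZMod m) : bf ω t j ≤ bf ω t' j := by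
  induction h with
  | refl => exact le_refl _
  | step _ ih => exact le_trans ih (bf_mono ω _ j)

lemma bf_step (t : ℕ) (s j : ZMod m) : bf ω t s - ω s (glab s j) ≤ bf ω (t + 1) j :=
  le_trans (Finset.le_sup' (fun s => bf ω t s - ω s (glab s j)) (Finset.mem_univ s))
    (le_max_right _ _)

lemma neg_wtZ_le_bf (l : List (Fin m)) : ∀ (s : ZMod m) (t : ℕ), l.length ≤ t →
    -wtZ ω s l ≤ bf ω t (s + sumZ l) := by
  induction l using List.reverseRecOn with
  | nil => intro s t _; simpa [wtZ, sumZ] using bf_nonneg ω t s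
  | append_singleton l i ih =>
      intro s t ht
      rw [List.length_append, List.length_singleton] at ht
      obtain ⟨t', rfl⟩ : ∃ t', t = t' + 1 := ⟨t - 1, by omega⟩
      have hlen : l.length ≤ t' := by omega
      have h1 := ih s t' hlen
      have h2 := bf_step ω t' (s + sumZ l) (s + sumZ l + ((i.1 + 1 : ℕ) : ZMod m))
      rw [glab_eq] at h2
      have h3 : wtZ ω s (l ++ [i]) = wtZ ω s l + ω (s + sumZ l) i := by
        rw [wtZ_append]; simp [wtZ]
      have h4 : sumZ (l ++ [i]) = sumZ l + ((i.1 + 1 : ℕ) : ZMod m) := by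
        rw [sumZ_append]; simp [sumZ]
      rw [h3, h4, ← add_assoc]
      linarith

lemma neg_wtZ_le_bf_m (hcyc : ∀ (s : ZMod m) (l : List (Fin m)), sumZ l = 0 → 0 ≤ wtZ ω s l) :
    ∀ (l : List (Fin m)) (s : ZMod m), -wtZ ω s l ≤ bf ω m (s + sumZ l) := by
  have main : ∀ (N : ℕ) (l : List (Fin m)), l.length ≤ N → ∀ s : ZMod m,
      -wtZ ω s l ≤ bf ω m (s + sumZ l) := by
    intro N
    induction N using Nat.strong_induction_on with
    | _ N ih =>
      intro l hlN s
      rcases le_or_gt l.length m with hsm | hbig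
      · exact neg_wtZ_le_bf ω l s m hsm
      · have hcard : Fintype.card (ZMod m) < Fintype.card (Fin (m + 1)) := by
          rw [ZMod.card, Fintype.card_fin]; omega
        obtain ⟨x, y, hxy, hgeq⟩ := Fintype.exists_ne_map_eq_of_card_lt
          (fun t : Fin (m + 1) => sumZ (l.take t.1)) hcard
        obtain ⟨p, q, hpq, hqm, hsum⟩ : ∃ p q : ℕ, p < q ∧ q ≤ m ∧
            sumZ (l.take p) = sumZ (l.take q) := by
          rcases Nat.lt_trichotomy x.1 y.1 with h | h | h
          · exact ⟨x.1, y.1, h, Nat.le_of_lt_succ y.2, hgeq⟩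
          · exact absurd (Fin.ext h) hxy
          · exact ⟨y.1, x.1, h, Nat.le_of_lt_succ x.2, hgeq.symm⟩
        set l₁ := l.take p with hl₁
        set l₂ := (l.drop p).take (q - p) with hl₂
        set l₃ := l.drop q with hl₃
        have hsplit : l = l₁ ++ (l₂ ++ l₃) := by
          rw [hl₁, hl₂, hl₃, show l.drop q = (l.drop p).drop (q - p) by
              rw [List.drop_drop]; congr 1; omega,
            List.take_append_drop, List.take_append_drop]
        have h12 : l₁ ++ l₂ = l.take q := by
          rw [hl₁, hl₂, ← List.take_add]
          congr 1
          omega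
        have hz2 : sumZ l₂ = 0 := by
          have hh := sumZ_append (m := m) l₁ l₂
          rw [h12, ← hsum] at hh
          exact (left_eq_add.mp hh)
        have hslen : (l₁ ++ l₃).length < l.length := by
          have ha : l₁.length = p := by rw [hl₁, List.length_take]; omega
          have hb : l₃.length = l.length - q := by rw [hl₃, List.length_drop]
          rw [List.length_append]; omega
        have hsz : sumZ (l₁ ++ l₃) = sumZ l := by
          conv_rhs => rw [hsplit]
          rw [sumZ_append, sumZ_append, sumZ_append, hz2]
          ring
        have hwt : wtZ ω s l = wtZ ω s (l₁ ++ l₃) + wtZ ω (s + sumZ l₁) l₂ := by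
          conv_lhs => rw [hsplit]
          rw [wtZ_append, wtZ_append, wtZ_append, hz2, add_zero]
          ring
        have hc := hcyc (s + sumZ l₁) l₂ hz2
        have hih := ih (l₁ ++ l₃).length (by omega) (l₁ ++ l₃) le_rfl s
        rw [hsz] at hih
        linarith
  exact fun l s => main l.length l le_rfl s

lemma bf_achieved : ∀ (t : ℕ) (j : ZMod m), ∃ (s : ZMod m) (l : List (Fin m)),
    l.length ≤ t ∧ s + sumZ l = j ∧ bf ω t j = -wtZ ω s l := by
  intro t
  induction t with
  | zero =>
      intro j
      exact ⟨j, [], by simp, by simp [sumZ], by simp [bf, wtZ]⟩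
  | succ t ih =>
      intro j
      rcases max_cases (bf ω t j)
        (Finset.univ.sup' Finset.univ_nonempty fun s => bf ω t s - ω s (glab s j)) with
        ⟨heq, _⟩ | ⟨heq, _⟩
      · obtain ⟨s, l, h1, h2, h3⟩ := ih j
        exact ⟨s, l, by omega, h2, by rw [bf_succ, heq, h3]⟩
      · obtain ⟨s₀, -, hs₀⟩ := Finset.exists_mem_eq_sup' Finset.univ_nonempty
          (fun s => bf ω t s - ω s (glab s j))
        obtain ⟨s, l, h1, h2, h3⟩ := ih s₀
        refine ⟨s, l ++ [glab s₀ j], ?_, ?_, ?_⟩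
        · rw [List.length_append, List.length_singleton]; omega
        · rw [sumZ_append, ← add_assoc, h2]
          have : sumZ [glab s₀ j] = (((glab s₀ j).1 + 1 : ℕ) : ZMod m) := by
            simp [sumZ]
          rw [this]
          exact cast_glab s₀ j
        · rw [bf_succ, heq, hs₀, wtZ_append, h2]
          have hw : wtZ ω s₀ [glab s₀ j] = ω s₀ (glab s₀ j) := by
            simp [wtZ]
          rw [hw, h3]
          ring
  
lemma bf_edge (hcyc : ∀ (s : ZMod m) (l : List (Fin m)), sumZ l = 0 → 0 ≤ wtZ ω s l)
    (s j : ZMod m) : bf ω m s - ω s (glab s j) ≤ bf ω m j := by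
  obtain ⟨s₀, l, hlen, hend, heq⟩ := bf_achieved ω m s
  have hm := neg_wtZ_le_bf_m ω hcyc (l ++ [glab s j]) s₀
  rw [wtZ_append, sumZ_append, ← add_assoc, hend] at hm
  have hw : wtZ ω s [glab s j] = ω s (glab s j) := by simp [wtZ]
  have hz : sumZ [glab s j] = (((glab s j).1 + 1 : ℕ) : ZMod m) := by simp [sumZ]
  rw [hw, hz, cast_glab s j] at hm
  linarith

end Graph

end AuxProof

theorem stmt11 {K : Type*} [Field K] [IsAlgClosed K] (k : ℕ) (hk : 2 ≤ k)
    (hch : ∀ p : ℕ, p.Prime → CharP K p → ¬ p ∣ k)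
    (α : K) (hα : IsAnxious k α) (hru : IsRootOfUnity α)
    (m : ℕ) (hm : 0 < m) (hmfix : α ^ k ^ m = α)
    (hmin : ∀ m' : ℕ, 0 < m' → α ^ k ^ m' = α → m ≤ m')
    (c : Fin m → RatFunc K) (hcz : ∀ i, c i ≠ 0)
    (hclm : ∀ i : ℕ, i < m → ∀ l : List (Fin m),
      α ^ k ^ (i + barSum l) = α ^ k ^ i → 0 ≤ clmList k (α ^ k ^ i) c l)
    (hminclm : ∀ (a : ℕ) (b : Fin m) (i : ℕ) (l : List (Fin m)),
      i < m → α ^ k ^ (i + barSum l) = α ^ k ^ i →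
      (∃ y : Fin l.length, α ^ k ^ (i + abarList l y.1) = α ^ k ^ a ∧ l.get y = b) →
      (∀ (i' : ℕ) (l' : List (Fin m)), i' < m → α ^ k ^ (i' + barSum l') = α ^ k ^ i' →
        (∃ y : Fin l'.length, α ^ k ^ (i' + abarList l' y.1) = α ^ k ^ a ∧ l'.get y = b) →
        clmList k (α ^ k ^ i) c l ≤ clmList k (α ^ k ^ i') c l') →
      clmList k (α ^ k ^ i) c l = 0) :
    ∃ h : Polynomial K, h ≠ 0 ∧
      ∀ (j : ℕ) (i : Fin m), 0 ≤ vAt (α ^ k ^ j) (act k (toRat h) c i) := by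
  classical
  haveI : NeZero m := ⟨hm.ne'⟩
  have hα0 : α ≠ 0 := fun h => hα (Or.inl h)
  have hper : ∀ t : ℕ, α ^ k ^ (t + m) = α ^ k ^ t := by
    intro t
    have h1 : k ^ (t + m) = k ^ m * k ^ t := by rw [pow_add, mul_comm]
    rw [h1, pow_mul, hmfix]
  have hkey : ∀ t : ℕ, α ^ k ^ t = α ^ k ^ (t % m) := by
    intro t
    induction t using Nat.strong_induction_on with
    | _ t ih =>
      rcases lt_or_ge t m with h | h
      · rw [Nat.mod_eq_of_lt h]
      · have h2 : t - m + m = t := Nat.sub_add_cancel h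
        have h3 := hper (t - m)
        rw [h2] at h3
        have h4 : t % m = (t - m) % m := by
          conv_lhs => rw [← h2]
          rw [Nat.add_mod_right]
        rw [h3, h4]
        exact ih (t - m) (by omega)
  have hmod : ∀ a b : ℕ, (a : ZMod m) = (b : ZMod m) → α ^ k ^ a = α ^ k ^ b := by
    intro a b hab
    have h := (ZMod.natCast_eq_natCast_iff a b m).mp hab
    rw [hkey a, hkey b, h]
  have hinjlt : ∀ a b : ℕ, a < b → b < m → α ^ k ^ a = α ^ k ^ b → False := by
    intro a b hab hbm he
    have h1 : α ^ (k ^ a * k ^ (m - b)) = α ^ (k ^ b * k ^ (m - b)) := by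
      rw [pow_mul, pow_mul, he]
    rw [← pow_add, ← pow_add] at h1
    have h2 : b + (m - b) = m := by omega
    rw [h2, hmfix] at h1
    have h3 := hmin (a + (m - b)) (by omega) h1
    omega
  have hinj : ∀ a b : ℕ, a < m → b < m → α ^ k ^ a = α ^ k ^ b → a = b := by
    intro a b ha hb he
    rcases Nat.lt_trichotomy a b with h | h | h
    · exact absurd he (fun he => hinjlt a b h hb he)
    · exact h
    · exact absurd he.symm (fun he => hinjlt b a h ha he)
  have hcastval : ∀ t : ℕ, α ^ k ^ t = α ^ k ^ ((t : ZMod m)).val := by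
    intro t
    apply hmod
    rw [ZMod.natCast_val, ZMod.cast_id]
  have hvalinj : ∀ x y : ZMod m, x.val = y.val → x = y := by
    intro x y hxy
    have hx : ((x.val : ℕ) : ZMod m) = x := by rw [ZMod.natCast_val, ZMod.cast_id]
    have hy : ((y.val : ℕ) : ZMod m) = y := by rw [ZMod.natCast_val, ZMod.cast_id]
    rw [← hx, ← hy, hxy]
  set ω : ZMod m → Fin m → ℤ := fun s i => vInt (α ^ k ^ s.val) (c i) with hωdef
  have clm_eq : ∀ (l : List (Fin m)) (s : ZMod m),
      clmList k (α ^ k ^ s.val) c l = ((wtZ ω s l : ℤ) : WithTop ℤ) := by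
    intro l
    induction l with
    | nil => intro s; simp [clmList, wtZ]
    | cons a l ih =>
      intro s
      have habar : ∀ i : ℕ, abarList (a :: l) (i + 1) = (a.1 + 1) + abarList l i := by
        intro i; simp [abarList, List.take_succ_cons]
      have hsplit : ∀ u : ℕ, (α ^ k ^ s.val) ^ k ^ ((a.1 + 1) + u)
          = (α ^ k ^ (s + ((a.1 + 1 : ℕ) : ZMod m)).val) ^ k ^ u := by
        intro u
        have h1 : (α ^ k ^ s.val) ^ k ^ ((a.1 + 1) + u)
            = (α ^ k ^ (s.val + (a.1 + 1))) ^ k ^ u := by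
          rw [← pow_mul, ← pow_mul]
          congr 1
          ring
        rw [h1]
        congr 1
        apply hmod
        rw [ZMod.natCast_val, ZMod.cast_id]
        push_cast
        rw [ZMod.natCast_val, ZMod.cast_id]
      rw [clmList]
      simp only [List.length_cons]
      rw [Fin.sum_univ_succ]
      have hhead : vAt ((α ^ k ^ s.val) ^ k ^ abarList (a :: l) (0 : Fin (l.length + 1)).1)
          (c ((a :: l).get (0 : Fin (l.length + 1)))) = ((ω s a : ℤ) : WithTop ℤ) := by
        have h00 : abarList (a :: l) (0 : Fin (l.length + 1)).1 = 0 := by simp [abarList]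
        rw [h00, pow_zero, pow_one]
        show vAt (α ^ k ^ s.val) (c a) = _
        rw [vAt, if_neg (hcz a)]
      rw [hhead]
      have htail : (∑ i : Fin l.length,
          vAt ((α ^ k ^ s.val) ^ k ^ abarList (a :: l) (Fin.succ i).1)
            (c ((a :: l).get (Fin.succ i))))
          = ((wtZ ω (s + ((a.1 + 1 : ℕ) : ZMod m)) l : ℤ) : WithTop ℤ) := by
        rw [← ih (s + ((a.1 + 1 : ℕ) : ZMod m)), clmList]
        apply Finset.sum_congr rfl
        intro x _
        have h1 : (Fin.succ x).1 = x.1 + 1 := rfl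
        rw [h1, habar x.1, hsplit (abarList l x.1)]
        rfl
      rw [htail]
      show _ = ((ω s a + wtZ ω (s + ((a.1 + 1 : ℕ) : ZMod m)) l : ℤ) : WithTop ℤ)
      norm_cast
  have hbs : ∀ l : List (Fin m), (barSum l : ZMod m) = sumZ l := by
    intro l
    induction l with
    | nil => simp [barSum, sumZ]
    | cons a l ih =>
        simp only [barSum, List.map_cons, List.sum_cons] at ih ⊢
        show (((a.1 + 1) + (l.map fun j => j.1 + 1).sum : ℕ) : ZMod m)
          = ((a.1 + 1 : ℕ) : ZMod m) + sumZ l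
        rw [Nat.cast_add, ih]
  have hcyc : ∀ (s : ZMod m) (l : List (Fin m)), sumZ l = 0 → 0 ≤ wtZ ω s l := by
    intro s l h0
    have hcond : α ^ k ^ (s.val + barSum l) = α ^ k ^ s.val := by
      apply hmod
      rw [Nat.cast_add, hbs, h0, add_zero]
    have h1 := hclm s.val (ZMod.val_lt s) l hcond
    rw [clm_eq l s] at h1
    exact_mod_cast h1
  set e : ZMod m → ℕ := fun j => (bf ω m j).toNat with hedef
  have hbf0 : ∀ jz : ZMod m, (e jz : ℤ) = bf ω m jz :=
    fun jz => Int.toNat_of_nonneg (bf_nonneg ω m jz)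
  set h : Polynomial K := ∏ jz : ZMod m, (X - C (α ^ k ^ jz.val)) ^ e jz with hhdef
  have hmon : h.Monic := monic_prod_of_monic _ _ fun jz _ => (monic_X_sub_C _).pow _
  refine ⟨h, hmon.ne_zero, ?_⟩
  intro j i
  have hkK : (k : K) ≠ 0 := by
    intro hk0
    rcases CharP.char_is_prime_or_zero K (ringChar K) with hpr | h0
    · exact hch (ringChar K) hpr (ringChar.charP K)
        ((CharP.cast_eq_zero_iff K (ringChar K) k).mp hk0)
    · haveI : CharP K 0 := h0 ▸ ringChar.charP K
      haveI : CharZero K := CharP.charP_to_charZero K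
      have := Nat.cast_eq_zero.mp hk0
      omega
  set KK : ℕ := k ^ (i.1 + 1) with hKKdef
  have hKKK : ((KK : ℕ) : K) ≠ 0 := by rw [hKKdef]; push_cast; exact pow_ne_zero _ hkK
  have hKKpos : KK ≠ 0 := by rw [hKKdef]; exact pow_ne_zero _ (by omega)
  set Hp : Polynomial K := ∏ jz : ZMod m, (X ^ KK - C (α ^ k ^ jz.val)) ^ e jz with hHdef
  have hHfac : ∀ jz : ZMod m, (X ^ KK - C (α ^ k ^ jz.val)) ≠ 0 :=
    fun jz => (monic_X_pow_sub_C _ hKKpos).ne_zero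
  have hHne : Hp ≠ 0 := by
    rw [hHdef]; exact Finset.prod_ne_zero_iff.mpr fun jz _ => pow_ne_zero _ (hHfac jz)
  have hsub : substPow KK (toRat h) = toRat Hp := by
    rw [substPow_toRat, hhdef, hHdef]
    congr 1
    rw [Polynomial.prod_comp]
    apply Finset.prod_congr rfl
    intro jz _
    rw [Polynomial.pow_comp, Polynomial.sub_comp, Polynomial.X_comp, Polynomial.C_comp]
  have hnum_ne : Hp * (c i).num ≠ 0 := mul_ne_zero hHne (RatFunc.num_ne_zero (hcz i))
  have hden_ne : h * (c i).denom ≠ 0 := mul_ne_zero hmon.ne_zero ((c i).denom_ne_zero)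
  have hact : act k (toRat h) c i =
      toRat (Hp * (c i).num) / toRat (h * (c i).denom) := by
    have hci : c i = toRat (c i).num / toRat (c i).denom := (RatFunc.num_div_denom (c i)).symm
    simp only [act]
    rw [← hKKdef, hsub, toRat_mul, toRat_mul]
    conv_lhs => rw [hci]
    rw [div_mul_div_comm]
  have hrm_xpow : ∀ γ a : K, a ≠ 0 →
      rootMultiplicity γ (X ^ KK - C a) = if γ ^ KK = a then 1 else 0 := by
    intro γ a ha
    by_cases hcase : γ ^ KK = a
    · rw [if_pos hcase]
      have hne : (X ^ KK - C a) ≠ 0 := (monic_X_pow_sub_C a hKKpos).ne_zero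
      have hroot : Polynomial.IsRoot (X ^ KK - C a) γ := by
        simp [Polynomial.IsRoot, hcase]
      have h1 : 1 ≤ rootMultiplicity γ (X ^ KK - C a) :=
        (Polynomial.rootMultiplicity_pos hne).mpr hroot
      have h2 : rootMultiplicity γ (X ^ KK - C a) ≤ 1 :=
        Polynomial.rootMultiplicity_le_one_of_separable
          (Polynomial.separable_X_pow_sub_C a hKKK ha) γ
      omega
    · rw [if_neg hcase, Polynomial.rootMultiplicity_eq_zero]
      simp [Polynomial.IsRoot, sub_eq_zero, hcase]
  have hrmh : rootMultiplicity (α ^ k ^ j) h = e ((j : ZMod m)) := by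
    rw [hhdef, rm_prod _ _ (fun jz _ => pow_ne_zero _ (X_sub_C_ne_zero _)) _,
      Finset.sum_eq_single_of_mem ((j : ZMod m)) (Finset.mem_univ _) ?hside1]
    · rw [rm_pow _ (X_sub_C_ne_zero _), ← hcastval j,
        Polynomial.rootMultiplicity_X_sub_C_self, mul_one]
    case hside1 =>
      intro b _ hb
      rw [rm_pow _ (X_sub_C_ne_zero _), Polynomial.rootMultiplicity_eq_zero, mul_zero]
      intro hroot
      apply hb
      have heq : α ^ k ^ j = α ^ k ^ b.val := by
        simpa [Polynomial.IsRoot, sub_eq_zero] using hroot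
      have h2 : ((j : ZMod m)).val = b.val :=
        hinj _ _ (ZMod.val_lt _) (ZMod.val_lt _) ((hcastval j).symm.trans heq)
      exact (hvalinj _ _ h2).symm
  have hd : (α ^ k ^ j) ^ KK = α ^ k ^ (j + (i.1 + 1)) := by
    rw [hKKdef, ← pow_mul, ← pow_add]
  have hcastadd : ((j + (i.1 + 1) : ℕ) : ZMod m)
      = (j : ZMod m) + ((i.1 + 1 : ℕ) : ZMod m) := by push_cast; ring
  have hrmH : rootMultiplicity (α ^ k ^ j) Hp
      = e ((j : ZMod m) + ((i.1 + 1 : ℕ) : ZMod m)) := by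
    rw [hHdef, rm_prod _ _ (fun jz _ => pow_ne_zero _ (hHfac jz)) _,
      Finset.sum_eq_single_of_mem ((j : ZMod m) + ((i.1 + 1 : ℕ) : ZMod m))
        (Finset.mem_univ _) ?hside2]
    · rw [rm_pow _ (hHfac _), hrm_xpow _ _ (pow_ne_zero _ hα0), if_pos ?hval, mul_one]
      case hval =>
        rw [hd, ← hcastadd]
        exact hcastval _
    case hside2 =>
      intro b _ hb
      rw [rm_pow _ (hHfac _), hrm_xpow _ _ (pow_ne_zero _ hα0), if_neg ?hne2, mul_zero]
      case hne2 =>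
        intro hcontra
        apply hb
        rw [hd] at hcontra
        have h2 : (((j + (i.1 + 1) : ℕ) : ZMod m)).val = b.val :=
          hinj _ _ (ZMod.val_lt _) (ZMod.val_lt _)
            ((hcastval (j + (i.1 + 1))).symm.trans hcontra)
        rw [← hcastadd]
        exact (hvalinj _ _ h2).symm
  have hactne : act k (toRat h) c i ≠ 0 := by
    rw [hact]
    exact div_ne_zero (toRat_ne_zero hnum_ne) (toRat_ne_zero hden_ne)
  rw [hact] at hactne ⊢
  rw [vAt, if_neg hactne, vInt_div_toRat _ hnum_ne hden_ne]
  have hgoal : (0 : ℤ) ≤ ((Hp * (c i).num).rootMultiplicity (α ^ k ^ j) : ℤ)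
      - ((h * (c i).denom).rootMultiplicity (α ^ k ^ j) : ℤ) := by
    rw [Polynomial.rootMultiplicity_mul hnum_ne, Polynomial.rootMultiplicity_mul hden_ne,
      hrmh, hrmH]
    have hedge := bf_edge ω hcyc (j : ZMod m) ((j : ZMod m) + ((i.1 + 1 : ℕ) : ZMod m))
    rw [glab_eq] at hedge
    have hωv : ω (j : ZMod m) i = ((c i).num.rootMultiplicity (α ^ k ^ j) : ℤ)
        - ((c i).denom.rootMultiplicity (α ^ k ^ j) : ℤ) := by
      show vInt (α ^ k ^ ((j : ZMod m)).val) (c i) = _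
      rw [← hcastval j, vInt]
    have h1 := hbf0 (j : ZMod m)
    have h2 := hbf0 ((j : ZMod m) + ((i.1 + 1 : ℕ) : ZMod m))
    push_cast at h2 hedge hωv ⊢
    linarith
  exact_mod_cast hgoal
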